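/- Let $p$ be a prime, let $k = \mathbb{F}_p(t,u)$ be the field of rational functions in two variables $t, u$ over the prime field $\mathbb{F}_p$, and let $A = k[X,Y]/(Y^p - t - X - uX^p)$. If $k'$ is a field extension of $k$ containing elements $\tau$ and $\mu$ with $\tau^p = t$ and $\mu^p = u$, then $A \otimes_k k' \cong k'[T]$ as $k'$-algebras; in particular, $A$ is an $\mathbb{A}^1$-form over $k$. -/

import Mathlib

open TensorProduct MvPolynomial

/-- The field `k = 𝔽_p(t,u)` of rational functions in two variables `t = X 0`, `u = X 1`
over the prime field `𝔽_p = ZMod p`, realized as the fraction field of the polynomial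
ring `𝔽_p[t,u]`. -/
def RatFunc2 (p : ℕ) [Fact p.Prime] : Type :=
  FractionRing (MvPolynomial (Fin 2) (ZMod p))

noncomputable instance (p : ℕ) [Fact p.Prime] : Field (RatFunc2 p) :=
  inferInstanceAs (Field (FractionRing (MvPolynomial (Fin 2) (ZMod p))))

noncomputable instance (p : ℕ) [Fact p.Prime] :
    Algebra (MvPolynomial (Fin 2) (ZMod p)) (RatFunc2 p) :=
  inferInstanceAs
    (Algebra (MvPolynomial (Fin 2) (ZMod p)) (FractionRing (MvPolynomial (Fin 2) (ZMod p))))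

/-- `k = 𝔽_p(t,u)` is indeed the field of fractions of `𝔽_p[t,u]`. -/
instance (p : ℕ) [Fact p.Prime] :
    IsFractionRing (MvPolynomial (Fin 2) (ZMod p)) (RatFunc2 p) :=
  inferInstanceAs (IsFractionRing (MvPolynomial (Fin 2) (ZMod p))
    (FractionRing (MvPolynomial (Fin 2) (ZMod p))))

/-- The element `t` of `𝔽_p(t,u)`. -/
noncomputable abbrev tVar (p : ℕ) [Fact p.Prime] : RatFunc2 p :=
  algebraMap (MvPolynomial (Fin 2) (ZMod p)) (RatFunc2 p) (X 0)

/-- The element `u` of `𝔽_p(t,u)`. -/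
noncomputable abbrev uVar (p : ℕ) [Fact p.Prime] : RatFunc2 p :=
  algebraMap (MvPolynomial (Fin 2) (ZMod p)) (RatFunc2 p) (X 1)

/-- The `k`-algebra `A = k[X,Y]/(Y^p - t - X - u·X^p)` over `k = 𝔽_p(t,u)`
(with `X = X 0`, `Y = X 1`). -/
noncomputable abbrev AsanumaExample (p : ℕ) [Fact p.Prime] :=
  MvPolynomial (Fin 2) (RatFunc2 p) ⧸
    Ideal.span {(X 1 : MvPolynomial (Fin 2) (RatFunc2 p)) ^ p
      - C (tVar p) - X 0 - C (uVar p) * (X 0) ^ p}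

/-- A witness that the `k`-algebra `A` is an `𝔸¹`-form over the field `k`:
an algebraic field extension `k'` of `k` together with an isomorphism of `k'`-algebras
`A ⊗[k] k' ≅ k'[T]`. -/
structure A1FormWitnessOverField (k A : Type*) [Field k] [CommRing A] [Algebra k A] where
  k' : Type*
  [fieldk' : Field k']
  [algk' : Algebra k k']
  isAlgebraic : Algebra.IsAlgebraic k k'
  equiv : (k' ⊗[k] A) ≃ₐ[k'] Polynomial k'

section Key

set_option maxHeartbeats 1000000 in
set_option synthInstance.maxHeartbeats 400000 in
/-- Key construction: given `τ, μ ∈ k'` with `τ^p = t`, `μ^p = u`, we build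
`k' ⊗[k] A ≃ₐ[k'] k'[T]`. -/
lemma asanuma_key (p : ℕ) [Fact p.Prime] (k' : Type*) [Field k']
    [Algebra (RatFunc2 p) k'] (τ μ : k')
    (hτ : τ ^ p = algebraMap (RatFunc2 p) k' (tVar p))
    (hμ : μ ^ p = algebraMap (RatFunc2 p) k' (uVar p)) :
    Nonempty ((k' ⊗[RatFunc2 p] AsanumaExample p) ≃ₐ[k'] Polynomial k') := by
  classical
  haveI : CharP (RatFunc2 p) p :=
    charP_of_injective_algebraMap
      (IsFractionRing.injective (MvPolynomial (Fin 2) (ZMod p)) (RatFunc2 p)) p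
  haveI : CharP k' p := charP_of_injective_algebraMap (algebraMap (RatFunc2 p) k').injective p
  set k := RatFunc2 p with hk
  let f : MvPolynomial (Fin 2) k :=
    (X 1 : MvPolynomial (Fin 2) k) ^ p - C (tVar p) - X 0 - C (uVar p) * X 0 ^ p
  let I : Ideal (MvPolynomial (Fin 2) k) := Ideal.span {f}
  let mk : MvPolynomial (Fin 2) k →ₐ[k] AsanumaExample p := Ideal.Quotient.mkₐ k I
  let v : Fin 2 → Polynomial k' :=
    ![Polynomial.X ^ p, Polynomial.X + Polynomial.C τ + Polynomial.C μ * Polynomial.X ^ p]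
  have hv : aeval v f = 0 := by
    simp only [f, map_sub, map_mul, map_pow, aeval_X, aeval_C]
    have hC : ∀ a : k, algebraMap k (Polynomial k') a = Polynomial.C (algebraMap k k' a) := by
      intro a
      rw [IsScalarTower.algebraMap_apply k k' (Polynomial k'), Polynomial.algebraMap_eq]
    rw [hC, hC, ← hτ, ← hμ]
    show (Polynomial.X + Polynomial.C τ + Polynomial.C μ * Polynomial.X ^ p) ^ p
        - Polynomial.C (τ ^ p) - Polynomial.X ^ p
        - Polynomial.C (μ ^ p) * (Polynomial.X ^ p) ^ p = 0
    rw [add_pow_char, add_pow_char, mul_pow, map_pow, map_pow]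
    ring
  have hker : ∀ a ∈ I, aeval v a = 0 := by
    intro a ha
    have : I ≤ RingHom.ker (aeval v : MvPolynomial (Fin 2) k →ₐ[k] Polynomial k') := by
      rw [Ideal.span_le, Set.singleton_subset_iff]
      exact hv
    exact this ha
  let g : AsanumaExample p →ₐ[k] Polynomial k' := Ideal.Quotient.liftₐ I (aeval v) hker
  have hg : ∀ q, g (mk q) = aeval v q := by
    intro q
    simp [g, mk, Ideal.Quotient.liftₐ_apply, Ideal.Quotient.mkₐ_eq_mk]
    rfl
  let F : (k' ⊗[k] AsanumaExample p) →ₐ[k'] Polynomial k' :=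
    Algebra.TensorProduct.lift (Algebra.ofId k' _) g (fun _ _ => Commute.all _ _)
  have hF : ∀ (a : k') (b : AsanumaExample p), F (a ⊗ₜ b) = Polynomial.C a * g b := by
    intro a b
    simp [F, Algebra.TensorProduct.lift_tmul, Algebra.ofId_apply, Polynomial.algebraMap_eq]
  haveI : Nontrivial (k' ⊗[k] AsanumaExample p) := F.toRingHom.domain_nontrivial
  haveI : CharP (k' ⊗[k] AsanumaExample p) p :=
    charP_of_injective_algebraMap
      (algebraMap k' (k' ⊗[k] AsanumaExample p)).injective p
  let xb : AsanumaExample p := mk (X 0)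
  let yb : AsanumaExample p := mk (X 1)
  have hrel : yb ^ p - algebraMap k (AsanumaExample p) (tVar p) - xb
      - algebraMap k (AsanumaExample p) (uVar p) * xb ^ p = 0 := by
    have hmkC : ∀ a : RatFunc2 p, Ideal.Quotient.mk I (C a)
        = algebraMap k (AsanumaExample p) a := fun a => rfl
    have h1 : yb ^ p - algebraMap k (AsanumaExample p) (tVar p) - xb
        - algebraMap k (AsanumaExample p) (uVar p) * xb ^ p = mk f := by
      simp only [f, map_sub, map_mul, map_pow, mk, Ideal.Quotient.mkₐ_eq_mk, xb, yb, hmkC]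
    rw [h1]
    exact Ideal.Quotient.eq_zero_iff_mem.mpr (Ideal.subset_span rfl)
  let z : k' ⊗[k] AsanumaExample p := 1 ⊗ₜ yb - τ ⊗ₜ 1 - μ ⊗ₜ xb
  have hz : z ^ p = (1 : k') ⊗ₜ[k] xb := by
    have h1 : z ^ p = (1 : k') ⊗ₜ (yb ^ p) - (τ ^ p) ⊗ₜ 1 - (μ ^ p) ⊗ₜ (xb ^ p) := by
      have e1 := sub_pow_char (R := k' ⊗[RatFunc2 p] AsanumaExample p)
        ((1 : k') ⊗ₜ yb - τ ⊗ₜ 1) (μ ⊗ₜ xb) (p := p)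
      have e2 := sub_pow_char (R := k' ⊗[RatFunc2 p] AsanumaExample p)
        ((1 : k') ⊗ₜ yb) (τ ⊗ₜ 1) (p := p)
      rw [show z = 1 ⊗ₜ yb - τ ⊗ₜ 1 - μ ⊗ₜ xb from rfl, e1, e2,
        Algebra.TensorProduct.tmul_pow, Algebra.TensorProduct.tmul_pow,
        Algebra.TensorProduct.tmul_pow, one_pow, one_pow]
    have hAM : ∀ (a : RatFunc2 p) (b : AsanumaExample p),
        (algebraMap (RatFunc2 p) k' a) ⊗ₜ[RatFunc2 p] b
          = (1 : k') ⊗ₜ[RatFunc2 p] (algebraMap (RatFunc2 p) (AsanumaExample p) a * b) := by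
      intro a b
      rw [Algebra.algebraMap_eq_smul_one (R := RatFunc2 p) (A := k'),
        TensorProduct.smul_tmul,
        Algebra.algebraMap_eq_smul_one (R := RatFunc2 p) (A := AsanumaExample p),
        smul_mul_assoc, one_mul]
    have h2 : (τ ^ p) ⊗ₜ[k] (1 : AsanumaExample p)
        = (1 : k') ⊗ₜ[k] (algebraMap k (AsanumaExample p) (tVar p)) := by
      rw [hτ, hAM, mul_one]
    have h3 : (μ ^ p) ⊗ₜ[k] (xb ^ p)
        = (1 : k') ⊗ₜ[k] (algebraMap k (AsanumaExample p) (uVar p) * xb ^ p) := by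
      rw [hμ, hAM]
    rw [h1, h2, h3, ← TensorProduct.tmul_sub, ← TensorProduct.tmul_sub]
    congr 1
    linear_combination hrel
  -- forward ∘ backward = id on k'[T]
  have hFz : F z = Polynomial.X := by
    have e1 : F ((1 : k') ⊗ₜ[k] yb) = aeval v (X 1 : MvPolynomial (Fin 2) (RatFunc2 p)) := by
      rw [hF, hg, map_one, one_mul]
    have e2 : F (τ ⊗ₜ[k] (1 : AsanumaExample p)) = Polynomial.C τ := by
      rw [hF, map_one, mul_one]
    have e3 : F (μ ⊗ₜ[k] xb)
        = Polynomial.C μ * aeval v (X 0 : MvPolynomial (Fin 2) (RatFunc2 p)) := by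
      rw [hF, hg]
    rw [show z = 1 ⊗ₜ yb - τ ⊗ₜ 1 - μ ⊗ₜ xb from rfl, map_sub, map_sub, e1, e2, e3,
      aeval_X, aeval_X]
    show (v 1) - Polynomial.C τ - Polynomial.C μ * (v 0) = Polynomial.X
    simp only [v, Matrix.cons_val_zero, Matrix.cons_val_one, Matrix.head_cons]
    ring
  have hFG : F.comp (Polynomial.aeval z : Polynomial k' →ₐ[k'] _) = AlgHom.id k' _ := by
    apply Polynomial.algHom_ext
    simp [hFz]
  have hGF : (Polynomial.aeval z : Polynomial k' →ₐ[k'] _).comp F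
      = AlgHom.id k' (k' ⊗[k] AsanumaExample p) := by
    apply Algebra.TensorProduct.ext
    · ext
    · apply Ideal.Quotient.algHom_ext
      apply MvPolynomial.algHom_ext
      intro i
      fin_cases i
      · show (Polynomial.aeval z) (F ((1 : k') ⊗ₜ[RatFunc2 p] mk (X 0)))
            = (1 : k') ⊗ₜ[RatFunc2 p] mk (X 0)
        rw [hF, map_one, one_mul, hg, aeval_X]
        show (Polynomial.aeval z) (Polynomial.X ^ p) = (1 : k') ⊗ₜ[RatFunc2 p] xb
        rw [Polynomial.aeval_X_pow]
        exact hz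
      · show (Polynomial.aeval z) (F ((1 : k') ⊗ₜ[RatFunc2 p] mk (X 1)))
            = (1 : k') ⊗ₜ[RatFunc2 p] mk (X 1)
        rw [hF, map_one, one_mul, hg, aeval_X]
        show (Polynomial.aeval z)
            (Polynomial.X + Polynomial.C τ + Polynomial.C μ * Polynomial.X ^ p)
            = (1 : k') ⊗ₜ[RatFunc2 p] yb
        rw [map_add, map_add, map_mul, Polynomial.aeval_X_pow, Polynomial.aeval_X, Polynomial.aeval_C,
          Polynomial.aeval_C, hz]
        rw [Algebra.TensorProduct.algebraMap_apply, Algebra.TensorProduct.algebraMap_apply]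
        rw [Algebra.TensorProduct.tmul_mul_tmul, mul_one, one_mul]
        show z + (algebraMap k' k' τ) ⊗ₜ[RatFunc2 p] 1
            + (algebraMap k' k' μ) ⊗ₜ[RatFunc2 p] xb = (1 : k') ⊗ₜ[RatFunc2 p] yb
        rw [show algebraMap k' k' τ = τ from rfl, show algebraMap k' k' μ = μ from rfl,
          show z = 1 ⊗ₜ[RatFunc2 p] yb - τ ⊗ₜ[RatFunc2 p] 1 - μ ⊗ₜ[RatFunc2 p] xb from rfl]
        abel
  exact ⟨AlgEquiv.ofAlgHom F (Polynomial.aeval z) hFG hGF⟩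

end Key

/-- **Example 1, form property.** Let `p` be a prime, `k = 𝔽_p(t,u)` and
`A = k[X,Y]/(Y^p - t - X - u·X^p)`.  If `k'` is a field extension of `k` containing
elements `τ`, `μ` with `τ^p = t` and `μ^p = u`, then `A ⊗[k] k' ≅ k'[T]` as
`k'`-algebras; in particular, `A` is an `𝔸¹`-form over `k`. -/
theorem asanumaExample_is_A1_form (p : ℕ) [Fact p.Prime] :
    (∀ (k' : Type*) [Field k'] [Algebra (RatFunc2 p) k'] (τ μ : k'),
      τ ^ p = algebraMap (RatFunc2 p) k' (tVar p) →
      μ ^ p = algebraMap (RatFunc2 p) k' (uVar p) →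
      Nonempty ((k' ⊗[RatFunc2 p] AsanumaExample p) ≃ₐ[k'] Polynomial k')) ∧
    Nonempty (A1FormWitnessOverField (RatFunc2 p) (AsanumaExample p)) := by
  have hp : 0 < p := (Fact.out (p := p.Prime)).pos
  refine ⟨fun k' _ _ τ μ hτ hμ => asanuma_key p k' τ μ hτ hμ, ?_⟩
  obtain ⟨τ, hτ⟩ := IsAlgClosed.exists_pow_nat_eq
    (k := AlgebraicClosure (RatFunc2 p))
    (algebraMap (RatFunc2 p) (AlgebraicClosure (RatFunc2 p)) (tVar p)) hp
  obtain ⟨μ, hμ⟩ := IsAlgClosed.exists_pow_nat_eq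
    (k := AlgebraicClosure (RatFunc2 p))
    (algebraMap (RatFunc2 p) (AlgebraicClosure (RatFunc2 p)) (uVar p)) hp
  -- lift to an arbitrary universe
  let K := ULift.{u_2} (AlgebraicClosure (RatFunc2 p))
  let eK : K ≃ₐ[RatFunc2 p] AlgebraicClosure (RatFunc2 p) :=
    AlgEquiv.ofRingEquiv (f := ULift.ringEquiv) (fun r => rfl)
  haveI : Algebra.IsAlgebraic (RatFunc2 p) K := eK.symm.isAlgebraic
  have hτ' : (ULift.up τ : K) ^ p = algebraMap (RatFunc2 p) K (tVar p) := by
    rw [ULift.algebraMap_eq, ← hτ]; rfl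
  have hμ' : (ULift.up μ : K) ^ p = algebraMap (RatFunc2 p) K (uVar p) := by
    rw [ULift.algebraMap_eq, ← hμ]; rfl
  obtain ⟨e⟩ := asanuma_key p K (ULift.up τ) (ULift.up μ) hτ' hμ'
  exact ⟨{ k' := K, isAlgebraic := inferInstance, equiv := e }⟩
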